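/- arXiv:2308.12237 — 3 statements merged into one kernel-verified Lean document; each statement's English description precedes it below -/
import Mathlib

section
/- Let G be a topological group, K a compact subgroup of G, and S a K-space. Write P = G ×_K S for the twisted product, let [g,s]_G denote the G-orbit of [g,s] in the G-space P and [g,s]_K the K-orbit of [g,s] under the restricted K-action. Then: (i) the map ι : P/G → P/K given by ι([g,s]_G) = [e,s]_K (where e is the identity of G) is well defined and continuous; (ii) the map r : P/K → P/G given by r([g,s]_K) = [g,s]_G is well defined and continuous; (iii) r ∘ ι = id on P/G. Consequently, ι is a topological embedding and P/G is homeomorphic to a retract of P/K. -/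
universe u v

section TwistedProduct

variable (G : Type u) [Group G] [TopologicalSpace G] (K : Subgroup G)
  (S : Type v) [TopologicalSpace S] [MulAction K S]

/-- The orbit equivalence relation of the `K`-action `k • (g, s) = (g * k⁻¹, k • s)`
on `G × S`. -/
def twistSetoid : Setoid (G × S) where
  r p q := ∃ k : K, q.1 = p.1 * (k : G)⁻¹ ∧ q.2 = k • p.2
  iseqv := by
    refine ⟨fun p => ⟨1, by simp⟩, ?_, ?_⟩
    · rintro p q ⟨k, h1, h2⟩
      exact ⟨k⁻¹, by simp [h1, mul_assoc], by simp [h2]⟩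
    · rintro p q r ⟨k, h1, h2⟩ ⟨l, h3, h4⟩
      exact ⟨l * k, by simp [h3, h1, mul_assoc], by simp [h4, h2, mul_smul]⟩

/-- The twisted product `G ×_K S`: the orbit space of the `K`-action
`k • (g, s) = (g * k⁻¹, k • s)` on `G × S`, with the quotient topology. -/
def TwistedProd : Type (max u v) := Quotient (twistSetoid G K S)

instance : TopologicalSpace (TwistedProd G K S) := instTopologicalSpaceQuotient

/-- `[g, s]`, the `K`-orbit of `(g, s)` in the twisted product `G ×_K S`. -/
def TwistedProd.mk (g : G) (s : S) : TwistedProd G K S :=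
  Quotient.mk (twistSetoid G K S) (g, s)

/-- The natural `G`-action on `G ×_K S`, given by `g' • [g, s] = [g' * g, s]`. -/
instance TwistedProd.instMulAction : MulAction G (TwistedProd G K S) where
  smul g' := Quotient.map (fun p => (g' * p.1, p.2))
    (by rintro p q ⟨k, h1, h2⟩; exact ⟨k, by simp [h1, mul_assoc], h2⟩)
  one_smul x := Quotient.inductionOn x fun p => by
    show Quotient.mk _ (1 * p.1, p.2) = Quotient.mk _ p
    simp
  mul_smul g₁ g₂ x := Quotient.inductionOn x fun p => by
    show Quotient.mk _ (g₁ * g₂ * p.1, p.2) = Quotient.mk _ (g₁ * (g₂ * p.1), p.2)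
    rw [mul_assoc]

end TwistedProduct

open Topology

/-- For a topological group `G`, a compact subgroup `K ≤ G` and a `K`-space `S`, the map
`ι : (G ×_K S)/G → (G ×_K S)/K`, `[g,s]_G ↦ [e,s]_K`, is well defined and continuous; the map
`r : (G ×_K S)/K → (G ×_K S)/G`, `[g,s]_K ↦ [g,s]_G`, is well defined and continuous;
`r ∘ ι = id`.  Consequently `ι` is an embedding and `(G ×_K S)/G` is homeomorphic to a retract
of `(G ×_K S)/K`. -/
theorem orbitSpace_twistedProd_retract (G : Type u) [Group G] [TopologicalSpace G]
    [IsTopologicalGroup G] (K : Subgroup G) (hK : IsCompact (K : Set G))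
    (S : Type u) [TopologicalSpace S] [MulAction K S] [ContinuousSMul K S] :
    ∃ (ι : Quotient (MulAction.orbitRel G (TwistedProd G K S)) →
           Quotient (MulAction.orbitRel K (TwistedProd G K S)))
      (r : Quotient (MulAction.orbitRel K (TwistedProd G K S)) →
           Quotient (MulAction.orbitRel G (TwistedProd G K S))),
      (∀ (g : G) (s : S), ι (Quotient.mk _ (TwistedProd.mk G K S g s)) =
          Quotient.mk _ (TwistedProd.mk G K S 1 s)) ∧
      Continuous ι ∧
      (∀ (g : G) (s : S), r (Quotient.mk _ (TwistedProd.mk G K S g s)) =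
          Quotient.mk _ (TwistedProd.mk G K S g s)) ∧
      Continuous r ∧
      r ∘ ι = id ∧
      IsEmbedding ι ∧
      ∃ A : Set (Quotient (MulAction.orbitRel K (TwistedProd G K S))),
        (∃ ρ : Quotient (MulAction.orbitRel K (TwistedProd G K S)) → A,
            Continuous ρ ∧ ∀ a : A, ρ (a : Quotient (MulAction.orbitRel K (TwistedProd G K S))) = a) ∧
        Nonempty (Quotient (MulAction.orbitRel G (TwistedProd G K S)) ≃ₜ A) := by
  clear hK
  set P := TwistedProd G K S with hP
  have key : ∀ (s : S) (k : K),
      (k : G) • (TwistedProd.mk G K S 1 s) = TwistedProd.mk G K S 1 (k • s) := by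
    intro s k
    show Quotient.mk _ ((k : G) * 1, s) = Quotient.mk _ ((1 : G), k • s)
    exact Quotient.sound ⟨k, by simp, rfl⟩
  have hF : ∀ (p q : G × S), (twistSetoid G K S).r p q →
      (Quotient.mk (MulAction.orbitRel K P) (TwistedProd.mk G K S 1 p.2) =
       Quotient.mk (MulAction.orbitRel K P) (TwistedProd.mk G K S 1 q.2)) := by
    rintro p q ⟨k, h1, h2⟩
    refine Quotient.sound ⟨k⁻¹, ?_⟩
    show ((k⁻¹ : K) : G) • (TwistedProd.mk G K S 1 q.2) = TwistedProd.mk G K S 1 p.2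
    rw [h2, ← key p.2 k, ← mul_smul]
    simp
  set F : P → Quotient (MulAction.orbitRel K P) :=
    Quotient.lift (fun p : G × S =>
      Quotient.mk (MulAction.orbitRel K P) (TwistedProd.mk G K S 1 p.2)) hF with hFdef
  have hFsmul : ∀ (g : G) (x : P), F (g • x) = F x := by
    intro g x
    induction x using Quotient.inductionOn with
    | h p =>
      show F (Quotient.mk _ (g * p.1, p.2)) = F (Quotient.mk _ p)
      rfl
  set ι : Quotient (MulAction.orbitRel G P) → Quotient (MulAction.orbitRel K P) :=
    Quotient.lift F (by
      intro x y hxy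
      obtain ⟨g, hg⟩ := hxy
      rw [← hg]
      exact hFsmul g y) with hιdef
  set r : Quotient (MulAction.orbitRel K P) → Quotient (MulAction.orbitRel G P) :=
    Quotient.lift (fun x : P => Quotient.mk (MulAction.orbitRel G P) x) (by
      intro x y hxy
      obtain ⟨k, hk⟩ := hxy
      exact Quotient.sound ⟨(k : G), hk⟩) with hrdef
  have hFcont : Continuous F := by
    refine Continuous.quotient_lift ?_ _
    exact continuous_quotient_mk'.comp
      ((continuous_quotient_mk'.comp (continuous_const.prodMk continuous_id)).comp
        continuous_snd)
  have hιcont : Continuous ι := hFcont.quotient_lift _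
  have hrcont : Continuous r := continuous_quotient_mk'.quotient_lift _
  have hri : r ∘ ι = id := by
    funext x
    induction x using Quotient.inductionOn with
    | h y =>
      induction y using Quotient.inductionOn with
      | h p =>
        show Quotient.mk _ (TwistedProd.mk G K S 1 p.2) = Quotient.mk _ (Quotient.mk _ p)
        refine Quotient.sound ⟨p.1⁻¹, ?_⟩
        show Quotient.mk (twistSetoid G K S) (p.1⁻¹ * p.1, p.2) = Quotient.mk _ ((1 : G), p.2)
        rw [inv_mul_cancel]
  have hemb : IsEmbedding ι := Function.LeftInverse.isEmbedding (congrFun hri) hrcont hιcont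
  refine ⟨ι, r, fun g s => rfl, hιcont, fun g s => rfl, hrcont, hri, hemb,
    Set.range ι, ⟨fun x => ⟨ι (r x), Set.mem_range_self _⟩,
      (hιcont.comp hrcont).subtype_mk _, ?_⟩, ⟨hemb.toHomeomorph⟩⟩
  rintro ⟨a, b, rfl⟩
  exact Subtype.ext (congrArg ι (congrFun hri b))
end

section
/- Let G be a locally compact Hausdorff topological group, H a compact subgroup of G, X a proper G-space (in Palais's sense), and S a global H-slice of X. Then the map ξ : G ×_H S → X defined by ξ([g,s]) = gs is a G-equivariant homeomorphism. -/
open Pointwise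

universe u

/-- Two subsets `U, V` of a `G`-space are *thin relative to each other* if
`{g : G | gU ∩ V ≠ ∅}` has compact closure in `G`. -/
def ThinPair (G : Type u) [Group G] [TopologicalSpace G] {X : Type u} [TopologicalSpace X]
    [MulAction G X] (U V : Set X) : Prop :=
  IsCompact (closure {g : G | (g • U) ∩ V ≠ ∅})

/-- A subset `U` of a `G`-space is *small* if every point has a neighborhood thin relative
to `U`. -/
def IsSmallSubset (G : Type u) [Group G] [TopologicalSpace G] {X : Type u} [TopologicalSpace X]
    [MulAction G X] (U : Set X) : Prop :=
  ∀ x : X, ∃ V ∈ nhds x, ThinPair G V U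

/-- A `G`-space is *proper in the sense of Palais* if every point has a small neighborhood. -/
def PalaisProper (G : Type u) [Group G] [TopologicalSpace G] (X : Type u) [TopologicalSpace X]
    [MulAction G X] : Prop :=
  ∀ x : X, ∃ U ∈ nhds x, IsSmallSubset G U

universe v

/-- **The tube lemma for global slices.** Let `G` be a locally compact Hausdorff group, `H` a
compact subgroup, `X` a Palais-proper `G`-space and `S` an `H`-invariant subset which is a
global `H`-slice of `X` (i.e. `G(S) = X` and there is a continuous `G`-equivariant
`f : X → G/H` with `S = f⁻¹(eH)`).  Then `ξ : G ×_H S → X`, `ξ [g, s] = g • s`, is a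
`G`-equivariant homeomorphism. -/
theorem twistedProd_globalSlice_homeomorph
    (G : Type u) [Group G] [TopologicalSpace G] [IsTopologicalGroup G]
    [LocallyCompactSpace G] [T2Space G]
    (H : Subgroup G) (hH : IsCompact (H : Set G))
    (X : Type u) [TopologicalSpace X] [MulAction G X] [ContinuousSMul G X]
    (hproper : PalaisProper G X)
    (S : SubMulAction H X)
    (hglobal : ∀ y : X, ∃ g : G, ∃ s ∈ (S : Set X), g • s = y)
    (f : X → G ⧸ H) (hf : Continuous f)
    (hfequiv : ∀ (g : G) (y : X), f (g • y) = g • f y)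
    (hfS : (S : Set X) = f ⁻¹' {QuotientGroup.mk (1 : G)}) :
    ∃ ξ : TwistedProd G H S ≃ₜ X,
      (∀ (g : G) (s : S), ξ (TwistedProd.mk G H S g s) = g • (s : X)) ∧
      (∀ (g : G) (p : TwistedProd G H S), ξ (g • p) = g • ξ p) := by
    classical
  -- the descended map `ξ₀ [g, s] = g • s`
  have hwd : ∀ p p' : G × S, (twistSetoid G H S).r p p' → p.1 • (p.2 : X) = p'.1 • (p'.2 : X) := by
    rintro ⟨g, s⟩ ⟨g', s'⟩ ⟨k, h1, h2⟩
    simp only at h1 h2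
    subst h1; subst h2
    show g • (s : X) = (g * (k : G)⁻¹) • ((k • s : S) : X)
    rw [SubMulAction.val_smul]
    show g • (s : X) = (g * (k : G)⁻¹) • ((k : G) • (s : X))
    rw [smul_smul, inv_mul_cancel_right]
  let ξ₀ : TwistedProd G H S → X := Quotient.lift (fun p : G × S => p.1 • (p.2 : X)) hwd
  have hξ₀mk : ∀ (g : G) (s : S), ξ₀ (TwistedProd.mk G H S g s) = g • (s : X) := fun _ _ => rfl
  have hfS1 : ∀ x : X, x ∈ (S : Set X) ↔ f x = QuotientGroup.mk (1 : G) := by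
    intro x
    rw [hfS]
    simp [Set.mem_preimage]
  have key : ∀ (g : G) (s : S), f (g • (s : X)) = QuotientGroup.mk g := by
    intro g s
    rw [hfequiv, (hfS1 s).mp s.2]
    show g • (QuotientGroup.mk (1 : G) : G ⧸ H) = QuotientGroup.mk g
    rw [MulAction.Quotient.smul_mk]
    simp [smul_eq_mul]
  have hinj : Function.Injective ξ₀ := by
    intro a b
    refine Quotient.inductionOn₂ a b ?_
    rintro ⟨g, s⟩ ⟨g', s'⟩ h
    have h' : g • (s : X) = g' • (s' : X) := h
    have hmk : (QuotientGroup.mk g : G ⧸ H) = QuotientGroup.mk g' := by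
      rw [← key g s, ← key g' s', h']
    have hk : g'⁻¹ * g ∈ H := QuotientGroup.eq.mp hmk.symm
    refine Quotient.sound ⟨⟨g'⁻¹ * g, hk⟩, ?_, ?_⟩
    · show g' = g * (g'⁻¹ * g)⁻¹
      group
    · apply Subtype.ext
      rw [SubMulAction.val_smul]
      show (s' : X) = (g'⁻¹ * g) • (s : X)
      rw [mul_smul, h', inv_smul_smul]
  have hsurj : Function.Surjective ξ₀ := by
    intro y
    obtain ⟨g, s, hs, hgs⟩ := hglobal y
    exact ⟨TwistedProd.mk G H S g ⟨s, hs⟩, hgs⟩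
  let e : TwistedProd G H S ≃ X := Equiv.ofBijective ξ₀ ⟨hinj, hsurj⟩
  have hcont : Continuous ξ₀ := by
    apply Continuous.quotient_lift
    exact continuous_fst.smul (continuous_subtype_val.comp continuous_snd)
  have hmkcont : Continuous (fun p : G × S => TwistedProd.mk G H S p.1 p.2) :=
    continuous_quot_mk
  -- the singleton `{eH}` is closed in `G ⧸ H`
  have hclosed : IsClosed ({QuotientGroup.mk (1 : G)} : Set (G ⧸ H)) := by
    rw [← (QuotientGroup.isQuotientMap_mk H).isClosed_preimage]
    have : (QuotientGroup.mk : G → G ⧸ H) ⁻¹' {QuotientGroup.mk (1 : G)} = (H : Set G) := by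
      ext g
      simp only [Set.mem_preimage, Set.mem_singleton_iff, QuotientGroup.eq, mul_one,
        inv_mem_iff, SetLike.mem_coe]
    rw [this]
    exact hH.isClosed
  -- continuity of the inverse
  have hcontinv : Continuous e.symm := by
    rw [continuous_iff_continuousAt]
    intro y₀
    obtain ⟨g₀, s₀x, hs₀, hgs₀⟩ := hglobal y₀
    set s₀ : S := ⟨s₀x, hs₀⟩ with hs₀def
    have hgs₀' : g₀ • (s₀ : X) = y₀ := hgs₀
    have hsymm : e.symm y₀ = TwistedProd.mk G H S g₀ s₀ := by
      apply e.injective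
      rw [Equiv.apply_symm_apply]
      exact hgs₀'.symm
    have hfy₀ : f y₀ = QuotientGroup.mk g₀ := by rw [← hgs₀']; exact key g₀ s₀
    obtain ⟨C, hCcomp, hCnhds⟩ := exists_compact_mem_nhds g₀
    -- a measurable-choice representative of `f y` in `C`
    let ρ : X → G := fun y =>
      if h : ∃ g ∈ C, (QuotientGroup.mk g : G ⧸ H) = f y then h.choose else 1
    have hρ : ∀ y : X, (∃ g ∈ C, (QuotientGroup.mk g : G ⧸ H) = f y) →
        ρ y ∈ C ∧ (QuotientGroup.mk (ρ y) : G ⧸ H) = f y := by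
      intro y h
      simp only [ρ, dif_pos h]
      exact ⟨h.choose_spec.1, h.choose_spec.2⟩
    have hev : {y : X | ∃ g ∈ C, (QuotientGroup.mk g : G ⧸ H) = f y} ∈ nhds y₀ := by
      have hopen : IsOpen ((QuotientGroup.mk : G → G ⧸ H) '' interior C) :=
        QuotientGroup.isOpenMap_coe _ isOpen_interior
      have hmem : f y₀ ∈ (QuotientGroup.mk : G → G ⧸ H) '' interior C :=
        ⟨g₀, mem_interior_iff_mem_nhds.mpr hCnhds, hfy₀.symm⟩
      refine Filter.mem_of_superset
        (hf.continuousAt.preimage_mem_nhds (hopen.mem_nhds hmem)) ?_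
      rintro y ⟨g, hg, hgy⟩
      exact ⟨g, interior_subset hg, hgy⟩
    -- suppose `e.symm` is not continuous at `y₀`
    by_contra hcon
    rw [ContinuousAt, Filter.tendsto_def] at hcon
    push_neg at hcon
    obtain ⟨W, hW, hWnot⟩ := hcon
    set L : Filter X := nhds y₀ ⊓ Filter.principal (e.symm ⁻¹' W)ᶜ with hLdef
    haveI hLne : L.NeBot := by
      rw [Filter.inf_principal_neBot_iff]
      intro U hU
      rw [← Set.diff_eq]
      rw [Set.diff_nonempty]
      intro hUB
      exact hWnot (Filter.mem_of_superset hU hUB)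
    have hevL : {y : X | ∃ g ∈ C, (QuotientGroup.mk g : G ⧸ H) = f y} ∈ L :=
      Filter.mem_inf_of_left hev
    have hCL : C ∈ Filter.map ρ L :=
      Filter.mem_map.mpr (Filter.mem_of_superset hevL fun y hy => (hρ y hy).1)
    haveI : (Filter.map ρ L).NeBot := hLne.map ρ
    obtain ⟨g', hg'C, hcl⟩ := hCcomp (Filter.le_principal_iff.mpr hCL)
    set L' : Filter X := L ⊓ Filter.comap ρ (nhds g') with hL'def
    haveI hL'ne : L'.NeBot := by
      have h1 : (Filter.map ρ L ⊓ nhds g').NeBot := by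
        rw [inf_comm]; exact hcl
      rw [← Filter.push_pull] at h1
      exact Filter.NeBot.of_map h1
    have tρ : Filter.Tendsto ρ L' (nhds g') :=
      Filter.tendsto_comap.mono_left inf_le_right
    have ty : Filter.Tendsto (fun y : X => y) L' (nhds y₀) :=
      Filter.tendsto_id.mono_left (le_trans inf_le_left inf_le_left)
    have tact : Filter.Tendsto (fun y : X => (ρ y)⁻¹ • y) L' (nhds (g'⁻¹ • y₀)) :=
      tρ.inv.smul ty
    have hevL' : ∀ᶠ y in L', ρ y ∈ C ∧ (QuotientGroup.mk (ρ y) : G ⧸ H) = f y :=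
      Filter.eventually_iff_exists_mem.mpr
        ⟨_, Filter.mem_inf_of_left hevL, fun y hy => hρ y hy⟩
    have hevf : ∀ᶠ y in L', f ((ρ y)⁻¹ • y) = QuotientGroup.mk (1 : G) := by
      filter_upwards [hevL'] with y hy
      rw [hfequiv, ← hy.2, MulAction.Quotient.smul_mk]
      simp [smul_eq_mul]
    have hmemS : ∀ᶠ y in L', (ρ y)⁻¹ • y ∈ (S : Set X) := by
      filter_upwards [hevf] with y hy
      exact (hfS1 _).mpr hy
    have hS' : g'⁻¹ • y₀ ∈ (S : Set X) := by
      rw [hfS1]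
      have tf : Filter.Tendsto (fun y : X => f ((ρ y)⁻¹ • y)) L' (nhds (f (g'⁻¹ • y₀))) :=
        (hf.tendsto _).comp tact
      have : f (g'⁻¹ • y₀) ∈ ({QuotientGroup.mk (1 : G)} : Set (G ⧸ H)) :=
        hclosed.mem_of_tendsto tf (hevf.mono fun y hy => hy)
      exact this
    set t : S := ⟨g'⁻¹ • y₀, hS'⟩ with htdef
    have hk : g'⁻¹ * g₀ ∈ H := by
      have h1 : f (g'⁻¹ • y₀) = QuotientGroup.mk (1 : G) := (hfS1 _).mp hS'
      rw [hfequiv, hfy₀, MulAction.Quotient.smul_mk, smul_eq_mul] at h1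
      have := QuotientGroup.eq.mp h1
      rw [mul_one, inv_mem_iff] at this
      exact this
    have heq : TwistedProd.mk G H S g' t = TwistedProd.mk G H S g₀ s₀ := by
      have hrel : (twistSetoid G H S).r (g₀, s₀) (g', t) := by
        refine ⟨⟨g'⁻¹ * g₀, hk⟩, ?_, ?_⟩
        · show g' = g₀ * (g'⁻¹ * g₀)⁻¹
          group
        · apply Subtype.ext
          rw [SubMulAction.val_smul]
          show (g'⁻¹ • y₀ : X) = (g'⁻¹ * g₀) • (s₀ : X)
          rw [mul_smul, hgs₀']
      exact (Quotient.sound hrel).symm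
    let τ : X → S := fun y =>
      if h : (ρ y)⁻¹ • y ∈ (S : Set X) then ⟨(ρ y)⁻¹ • y, h⟩ else s₀
    have tτ : Filter.Tendsto τ L' (nhds t) := by
      rw [tendsto_subtype_rng]
      refine tact.congr' ?_
      filter_upwards [hmemS] with y hy
      simp only [τ, dif_pos hy]
    have tmk : Filter.Tendsto (fun y : X => TwistedProd.mk G H S (ρ y) (τ y)) L'
        (nhds (TwistedProd.mk G H S g' t)) :=
      (hmkcont.tendsto (g', t)).comp (tρ.prodMk_nhds tτ)
    have hW' : W ∈ nhds (TwistedProd.mk G H S g' t) := by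
      rw [heq, ← hsymm]; exact hW
    have hevW : ∀ᶠ y in L', TwistedProd.mk G H S (ρ y) (τ y) ∈ W := tmk hW'
    have heqsymm : ∀ᶠ y in L', e.symm y = TwistedProd.mk G H S (ρ y) (τ y) := by
      filter_upwards [hmemS] with y hy
      apply e.injective
      rw [Equiv.apply_symm_apply]
      show y = ρ y • ((τ y : X))
      simp only [τ, dif_pos hy]
      rw [smul_inv_smul]
    have hnotW : ∀ᶠ y in L', e.symm y ∉ W := by
      have : (e.symm ⁻¹' W)ᶜ ∈ L' :=
        Filter.mem_inf_of_left (Filter.mem_inf_of_right (Filter.mem_principal_self _))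
      filter_upwards [this] with y hy
      exact hy
    obtain ⟨y, ⟨h1, h2⟩, h3⟩ := ((hevW.and heqsymm).and hnotW).exists
    exact h3 (h2 ▸ h1)
  refine ⟨{ toEquiv := e, continuous_toFun := hcont, continuous_invFun := hcontinv },
    fun g s => rfl, fun g p => ?_⟩
  refine Quotient.inductionOn p fun q => ?_
  show (g * q.1) • (q.2 : X) = g • (q.1 • (q.2 : X))
  rw [mul_smul]
end

section
/- Let G be a locally compact Hausdorff topological group, H a closed normal subgroup of G, K a compact subgroup of G, and S a K-space. Then the H-orbit space (G ×_K S)/H of the twisted product G ×_K S is G/H-homeomorphic to the twisted product G/H ×_K S; explicitly, the map sending the H-orbit of [g,s] ∈ G ×_K S to [gH, s] ∈ G/H ×_K S is a well-defined homeomorphism which is equivariant with respect to the G/H-actions on both sides. -/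
universe u v

section TwistedProductQuotient

variable (G : Type u) [Group G] [TopologicalSpace G] (H : Subgroup G) [H.Normal]
  (K : Subgroup G) (S : Type v) [TopologicalSpace S] [MulAction K S]

/-- The orbit equivalence relation of the `K`-action `k • (gH, s) = (g k⁻¹ H, k • s)`
on `(G/H) × S`. -/
def twistSetoidQ : Setoid ((G ⧸ H) × S) where
  r p q := ∃ k : K, q.1 = p.1 * (QuotientGroup.mk (k : G))⁻¹ ∧ q.2 = k • p.2
  iseqv := by
    refine ⟨fun p => ⟨1, by simp⟩, ?_, ?_⟩
    · rintro p q ⟨k, h1, h2⟩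
      refine ⟨k⁻¹, by simp [h1, mul_assoc], by simp [h2]⟩
    · rintro p q r ⟨k, h1, h2⟩ ⟨l, h3, h4⟩
      refine ⟨l * k, by simp [h3, h1, mul_assoc], by simp [h4, h2, mul_smul]⟩

/-- The twisted product `(G/H) ×_K S`: the orbit space of the `K`-action
`k • (gH, s) = (g k⁻¹ H, k • s)` on `(G/H) × S`, with the quotient topology. -/
def TwistedProdQ : Type (max u v) := Quotient (twistSetoidQ G H K S)

instance : TopologicalSpace (TwistedProdQ G H K S) := instTopologicalSpaceQuotient

/-- `[gH, s]`, the `K`-orbit of `(gH, s)` in the twisted product `(G/H) ×_K S`. -/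
def TwistedProdQ.mk (c : G ⧸ H) (s : S) : TwistedProdQ G H K S :=
  Quotient.mk (twistSetoidQ G H K S) (c, s)

/-- The natural `G/H`-action on `(G/H) ×_K S`, given by `g'H • [gH, s] = [g'gH, s]`. -/
instance TwistedProdQ.instMulAction : MulAction (G ⧸ H) (TwistedProdQ G H K S) where
  smul c' := Quotient.map (fun p => (c' * p.1, p.2))
    (by rintro p q ⟨k, h1, h2⟩; exact ⟨k, by simp [h1, mul_assoc], h2⟩)
  one_smul x := Quotient.inductionOn x fun p => by
    show Quotient.mk _ (1 * p.1, p.2) = Quotient.mk _ p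
    simp
  mul_smul c₁ c₂ x := Quotient.inductionOn x fun p => by
    show Quotient.mk _ (c₁ * c₂ * p.1, p.2) = Quotient.mk _ (c₁ * (c₂ * p.1), p.2)
    rw [mul_assoc]

end TwistedProductQuotient

variable {G : Type u} [Group G] {X : Type u} [MulAction G X]

/-- For a normal subgroup `H ≤ G`, the natural `G/H`-action on the `H`-orbit space `X/H`,
given by `(gH) • H(x) = H(g • x)`. -/
instance quotientOrbitMulAction (H : Subgroup G) [H.Normal] :
    MulAction (G ⧸ H) (Quotient (MulAction.orbitRel H X)) where
  smul c x := Quotient.liftOn₂ c x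
    (fun g y => Quotient.mk (MulAction.orbitRel H X) (g • y))
    (by
      intro g₁ y₁ g₂ y₂ hg hy
      have hg' : g₁⁻¹ * g₂ ∈ H := QuotientGroup.leftRel_apply.mp hg
      have hy' : y₁ ∈ MulAction.orbit H y₂ := MulAction.orbitRel_apply.mp hy
      obtain ⟨h, hh⟩ := hy'
      apply Quotient.sound
      refine MulAction.orbitRel_apply.mpr ⟨⟨g₁ * (h : G) * g₂⁻¹, ?_⟩, ?_⟩
      · have : g₁ * (h : G) * g₂⁻¹ = g₁ * ((h : G) * (g₁⁻¹ * g₂)⁻¹) * g₁⁻¹ := by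
          group
        rw [this]
        exact (Subgroup.Normal.conj_mem ‹H.Normal› _ (H.mul_mem h.2 (H.inv_mem hg')) g₁)
      · show (g₁ * (h : G) * g₂⁻¹) • (g₂ • y₂) = g₁ • y₁
        have hhy : (h : G) • y₂ = y₁ := hh
        rw [← hhy]
        rw [smul_smul, smul_smul]
        congr 1
        group)
  one_smul x := by
    refine Quotient.inductionOn x (fun y => ?_)
    show Quotient.mk _ ((1 : G) • y) = _
    rw [one_smul]
  mul_smul c₁ c₂ x := by
    refine QuotientGroup.induction_on c₁ (fun g₁ => ?_)
    refine QuotientGroup.induction_on c₂ (fun g₂ => ?_)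
    refine Quotient.inductionOn x (fun y => ?_)
    show Quotient.mk _ ((g₁ * g₂) • y) = Quotient.mk _ (g₁ • g₂ • y)
    rw [mul_smul]

section AuxMaps

variable (G : Type u) [Group G] [TopologicalSpace G] [IsTopologicalGroup G]
  (H : Subgroup G) [H.Normal]
  (K : Subgroup G) (S : Type u) [TopologicalSpace S] [MulAction K S]

/-- The forward map on `G × S`. -/
def twFwd0 : G × S → TwistedProdQ G H K S :=
  fun p => TwistedProdQ.mk G H K S (QuotientGroup.mk p.1) p.2

lemma twFwd0_sound1 : ∀ p q : G × S, (twistSetoid G K S).r p q →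
    twFwd0 G H K S p = twFwd0 G H K S q := by
  rintro p q ⟨k, h1, h2⟩
  exact Quotient.sound ⟨k, by simp [h1], h2⟩

/-- The forward map on `G ×_K S`. -/
def twFwd1 : TwistedProd G K S → TwistedProdQ G H K S :=
  Quotient.lift (twFwd0 G H K S) (twFwd0_sound1 G H K S)

lemma twFwd1_sound : ∀ x y : TwistedProd G K S,
    (MulAction.orbitRel H (TwistedProd G K S)).r x y →
    twFwd1 G H K S x = twFwd1 G H K S y := by
  intro x y hxy
  obtain ⟨h, rfl⟩ := MulAction.orbitRel_apply.mp hxy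
  refine Quotient.inductionOn y (fun p => ?_)
  show twFwd0 G H K S ((h : G) * p.1, p.2) = twFwd0 G H K S p
  have : (QuotientGroup.mk ((h : G) * p.1) : G ⧸ H) = QuotientGroup.mk p.1 := by
    refine QuotientGroup.eq.mpr ?_
    have : ((h : G) * p.1)⁻¹ * p.1 = p.1⁻¹ * (h : G)⁻¹ * (p.1⁻¹)⁻¹ := by group
    rw [this]
    exact Subgroup.Normal.conj_mem ‹H.Normal› _ (H.inv_mem h.2) p.1⁻¹
  show TwistedProdQ.mk G H K S (QuotientGroup.mk ((h : G) * p.1)) p.2 =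
    TwistedProdQ.mk G H K S (QuotientGroup.mk p.1) p.2
  rw [this]

/-- The forward map on the orbit space. -/
def twFwd : Quotient (MulAction.orbitRel H (TwistedProd G K S)) → TwistedProdQ G H K S :=
  Quotient.lift (twFwd1 G H K S) (twFwd1_sound G H K S)

/-- The backward map on `G × S`. -/
def twBwd0 : G × S → Quotient (MulAction.orbitRel H (TwistedProd G K S)) :=
  fun p => Quotient.mk _ (TwistedProd.mk G K S p.1 p.2)

lemma twBwd0_coset (g₁ g₂ : G) (s : S) (hg : g₁⁻¹ * g₂ ∈ H) :
    twBwd0 G H K S (g₁, s) = twBwd0 G H K S (g₂, s) := by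
  apply Quotient.sound
  refine MulAction.orbitRel_apply.mpr ⟨⟨g₁ * g₂⁻¹, ?_⟩, ?_⟩
  · have : g₁ * g₂⁻¹ = g₁ * (g₁⁻¹ * g₂)⁻¹ * g₁⁻¹ := by group
    rw [this]
    exact Subgroup.Normal.conj_mem ‹H.Normal› _ (H.inv_mem hg) g₁
  · show Quotient.mk (twistSetoid G K S) (g₁ * g₂⁻¹ * g₂, s) = TwistedProd.mk G K S g₁ s
    have : g₁ * g₂⁻¹ * g₂ = g₁ := by group
    rw [this]; rfl

/-- The backward map on `(G/H) × S`. -/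
def twBwd1 : (G ⧸ H) × S → Quotient (MulAction.orbitRel H (TwistedProd G K S)) :=
  fun cs => Quotient.liftOn cs.1 (fun g => twBwd0 G H K S (g, cs.2))
    (fun g₁ g₂ hg => twBwd0_coset G H K S g₁ g₂ cs.2 (QuotientGroup.leftRel_apply.mp hg))

lemma twBwd1_sound : ∀ p q : (G ⧸ H) × S, (twistSetoidQ G H K S).r p q →
    twBwd1 G H K S p = twBwd1 G H K S q := by
  rintro ⟨c, s⟩ ⟨c', s'⟩ ⟨k, h1, h2⟩
  simp only at h1 h2
  subst h1 h2
  refine QuotientGroup.induction_on c (fun g => ?_)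
  have hc : (QuotientGroup.mk g : G ⧸ H) * (QuotientGroup.mk (k : G))⁻¹ =
      QuotientGroup.mk (g * (k : G)⁻¹) := by simp
  rw [hc]
  show twBwd0 G H K S (g, s) = twBwd0 G H K S (g * (k : G)⁻¹, k • s)
  unfold twBwd0
  congr 1
  exact Quotient.sound ⟨k, rfl, rfl⟩

/-- The backward map. -/
def twBwd : TwistedProdQ G H K S → Quotient (MulAction.orbitRel H (TwistedProd G K S)) :=
  Quotient.lift (twBwd1 G H K S) (twBwd1_sound G H K S)

lemma twFwd_continuous : Continuous (twFwd G H K S) := by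
  refine Continuous.quotient_lift ?_ _
  refine Continuous.quotient_lift ?_ _
  exact continuous_quotient_mk'.comp
    ((continuous_quotient_mk'.comp continuous_fst).prodMk continuous_snd)

lemma twBwd_continuous : Continuous (twBwd G H K S) := by
  refine Continuous.quotient_lift ?_ _
  have hq : Topology.IsQuotientMap (Prod.map (QuotientGroup.mk : G → G ⧸ H) (id : S → S)) := by
    refine IsOpenMap.isQuotientMap ?_ ?_ ?_
    · exact (QuotientGroup.isOpenMap_coe (N := H)).prodMap IsOpenMap.id
    · exact (continuous_quotient_mk').prodMap continuous_id
    · exact (QuotientGroup.mk_surjective).prodMap Function.surjective_id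
  rw [hq.continuous_iff]
  exact continuous_quotient_mk'.comp continuous_quotient_mk'

lemma twFwd_equivariant (c : G ⧸ H)
    (p : Quotient (MulAction.orbitRel H (TwistedProd G K S))) :
    twFwd G H K S (c • p) = c • twFwd G H K S p := by
  refine QuotientGroup.induction_on c (fun g' => ?_)
  refine Quotient.inductionOn p (fun y => ?_)
  refine Quotient.inductionOn y (fun q => ?_)
  show Quotient.mk (twistSetoidQ G H K S) ((QuotientGroup.mk (g' * q.1) : G ⧸ H), q.2) =
    Quotient.mk (twistSetoidQ G H K S)
      ((QuotientGroup.mk g' * QuotientGroup.mk q.1 : G ⧸ H), q.2)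
  rw [QuotientGroup.mk_mul]

end AuxMaps

/-- For a locally compact Hausdorff group `G`, a closed normal subgroup `H`, a compact
subgroup `K` and a `K`-space `S`, the `H`-orbit space `(G ×_K S)/H` is `G/H`-equivariantly
homeomorphic to the twisted product `(G/H) ×_K S`, via the map sending the `H`-orbit of
`[g, s]` to `[gH, s]`. -/
theorem orbitSpace_twistedProd_homeomorph_twistedProdQ
    (G : Type u) [Group G] [TopologicalSpace G] [IsTopologicalGroup G]
    [LocallyCompactSpace G] [T2Space G]
    (H : Subgroup G) (hHclosed : IsClosed (H : Set G)) [H.Normal]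
    (K : Subgroup G) (hK : IsCompact (K : Set G))
    (S : Type u) [TopologicalSpace S] [MulAction K S] [ContinuousSMul K S] :
    ∃ φ : Quotient (MulAction.orbitRel H (TwistedProd G K S)) ≃ₜ TwistedProdQ G H K S,
      (∀ (g : G) (s : S),
        φ (Quotient.mk _ (TwistedProd.mk G K S g s)) =
          TwistedProdQ.mk G H K S (QuotientGroup.mk g) s) ∧
      (∀ (c : G ⧸ H) (p : Quotient (MulAction.orbitRel H (TwistedProd G K S))),
        φ (c • p) = c • φ p) := by
  refine ⟨⟨⟨twFwd G H K S, twBwd G H K S, ?_, ?_⟩,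
      twFwd_continuous G H K S, twBwd_continuous G H K S⟩, ?_, ?_⟩
  · intro x
    refine Quotient.inductionOn x (fun y => ?_)
    refine Quotient.inductionOn y (fun p => ?_)
    rfl
  · intro x
    refine Quotient.inductionOn x (fun p => ?_)
    obtain ⟨c, s⟩ := p
    refine QuotientGroup.induction_on c (fun g => ?_)
    rfl
  · intro g s
    rfl
  · exact fun c p => twFwd_equivariant G H K S c p
end
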